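/- arXiv:2512.01733 — 3 statements merged into one kernel-verified Lean document; each statement's English description precedes it below -/
import Mathlib

section
/- (Concatenation construction.) Let Aut₁ = (L₁, χ₁, Attr₁, Q₁, {q₀₁}, F₁, Δ₁) and Aut₂ = (L₂, χ₂, Attr₂, Q₂, {q₀₂}, F₂, Δ₂) be parametric automata with disjoint state sets and single initial states, and assume that no state of F₁ has an outgoing transition in Δ₁. Let Aut' be the parametric automaton with state set Q₁ ∪ Q₂, single initial state q₀₁, final states F₂, and transitions Δ' = (Δ₁ minus all transitions whose target lies in F₁) ∪ Δ₂ ∪ { q →(t, φ, inv) q₀₂ : q →(t, φ, inv) q_f ∈ Δ₁ for some q_f ∈ F₁ }. If Aut₁ accepts a nonempty element sequence p₁ with assignment μ₁, Aut₂ accepts an element sequence p₂ with assignment μ₂, and μ₁ and μ₂ are unifiable, then Aut' accepts the concatenation p₁·p₂ with assignment μ₁ ∪ μ₂. -/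
/-- A property value: a string constant or a rational number. -/
inductive Val where
  | str : String → Val
  | num : ℚ → Val

def Val.asNum : Val → Option ℚ
  | .num q => some q
  | _ => none

/-- A linear term with rational coefficients over global parameters `χ`
and numeric properties `P`. -/
inductive LinTerm (χ P : Type) where
  | const : ℚ → LinTerm χ P
  | param : ℚ → χ → LinTerm χ P
  | prop  : ℚ → P → LinTerm χ P
  | add   : LinTerm χ P → LinTerm χ P → LinTerm χ P

/-- A partial assignment of rationals to the global parameters. -/
def Assignment (χ : Type) : Type := χ → Option ℚ

def Assignment.empty (χ : Type) : Assignment χ := fun _ => none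

/-- Two assignments are unifiable if they agree on the intersection of their domains. -/
def Unifiable {χ : Type} (μ₁ μ₂ : Assignment χ) : Prop :=
  ∀ x a b, μ₁ x = some a → μ₂ x = some b → a = b

/-- The common extension of two (unifiable) assignments. -/
def Assignment.union {χ : Type} (μ₁ μ₂ : Assignment χ) : Assignment χ :=
  fun x => (μ₁ x).orElse (fun _ => μ₂ x)

/-- Evaluation of a linear term under a parameter assignment and a partial
property valuation; `none` when some needed value is undefined or non-numeric. -/
def LinTerm.eval {χ P : Type} (μ : Assignment χ) (f : P → Option Val) :
    LinTerm χ P → Option ℚ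
  | .const c => some c
  | .param c x => (μ x).map (fun q => c * q)
  | .prop c p => ((f p).bind Val.asNum).map (fun q => c * q)
  | .add t₁ t₂ => do
      let a ← LinTerm.eval μ f t₁
      let b ← LinTerm.eval μ f t₂
      pure (a + b)

/-- Comparison operators for (in)equality atoms. -/
inductive Cmp where
  | lt | le | eq | ge | gt | ne

def Cmp.holds : Cmp → ℚ → ℚ → Prop
  | .lt, a, b => a < b
  | .le, a, b => a ≤ b
  | .eq, a, b => a = b
  | .ge, a, b => a ≥ b
  | .gt, a, b => a > b
  | .ne, a, b => a ≠ b

/-- An atom of a data constraint: a string-equality between a string property and a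
string constant, or an (in)equality between linear terms. -/
inductive Atom (χ P : Type) where
  | strEq : P → String → Atom χ P
  | cmp   : LinTerm χ P → Cmp → LinTerm χ P → Atom χ P

def Atom.sat {χ P : Type} (μ : Assignment χ) (f : P → Option Val) : Atom χ P → Prop
  | .strEq p c => f p = some (.str c)
  | .cmp t₁ op t₂ => ∃ a b, LinTerm.eval μ f t₁ = some a ∧ LinTerm.eval μ f t₂ = some b ∧
      Cmp.holds op a b

/-- A data constraint: a finite conjunction (list) of atoms. `[]` is `true`. -/
abbrev Constraint (χ P : Type) : Type := List (Atom χ P)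

/-- A data constraint holds when all of its atoms hold. -/
def Constraint.sat {χ P : Type} (μ : Assignment χ) (f : P → Option Val)
    (φ : Constraint χ P) : Prop := ∀ a ∈ φ, Atom.sat μ f a

/-- An element: a label (a forward label together with a Boolean flag that is `true`
for inverse labels) and a partial property valuation. -/
def Element (L P : Type) : Type := (L × Bool) × (P → Option Val)

/-- Replace the label of an element by its inverse. -/
def Element.invert {L P : Type} (el : Element L P) : Element L P :=
  ((el.1.1, !el.1.2), el.2)

/-- A parametric automaton over forward labels `L`, global parameters `χ`,
properties `P`, with (finite) state type `Q`: initial states, final states, and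
transitions carrying a forward label, a data constraint and an inverse flag. -/
structure PAutomaton (L χ P Q : Type) where
  init : Set Q
  final : Set Q
  delta : Set (Q × (L × Constraint χ P × Bool) × Q)

/-- `A.AcceptsFrom μ q p`: starting at state `q`, the automaton can read the element
sequence `p` along transitions whose labels, inverse flags, and data constraints are
matched (constraints evaluated under `μ`), ending in a final state. -/
inductive PAutomaton.AcceptsFrom {L χ P Q : Type} (A : PAutomaton L χ P Q)
    (μ : Assignment χ) : Q → List (Element L P) → Prop
  | nil (q : Q) : q ∈ A.final → PAutomaton.AcceptsFrom A μ q []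
  | cons {q q' : Q} {l : L} {φ : Constraint χ P} {inv : Bool}
      {f : P → Option Val} {rest : List (Element L P)} :
      (q, (l, φ, inv), q') ∈ A.delta →
      Constraint.sat μ f φ →
      PAutomaton.AcceptsFrom A μ q' rest →
      PAutomaton.AcceptsFrom A μ q (((l, inv), f) :: rest)

/-- Acceptance of an element sequence with an assignment: some run from an initial
state to a final state reads the sequence. -/
def PAutomaton.Accepts {L χ P Q : Type} (A : PAutomaton L χ P Q)
    (μ : Assignment χ) (p : List (Element L P)) : Prop :=
  ∃ q₀ ∈ A.init, PAutomaton.AcceptsFrom A μ q₀ p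

lemma LinTerm.eval_mono {χ P : Type} {μ ν : Assignment χ} (f : P → Option Val)
    (h : ∀ x q, μ x = some q → ν x = some q) :
    ∀ (t : LinTerm χ P) (a : ℚ), LinTerm.eval μ f t = some a → LinTerm.eval ν f t = some a := by
  intro t
  induction t with
  | const c => intro a ha; exact ha
  | param c x =>
      intro a ha
      simp only [LinTerm.eval, Option.map_eq_some_iff] at ha ⊢
      obtain ⟨q, hq, rfl⟩ := ha
      exact ⟨q, h x q hq, rfl⟩
  | prop c p => intro a ha; exact ha
  | add t₁ t₂ ih₁ ih₂ =>
      intro a ha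
      simp only [LinTerm.eval, Option.bind_eq_bind, Option.bind_eq_some_iff] at ha ⊢
      obtain ⟨b, hb, c, hc, habc⟩ := ha
      exact ⟨b, ih₁ b hb, c, ih₂ c hc, habc⟩

lemma Constraint.sat_mono {χ P : Type} {μ ν : Assignment χ} {f : P → Option Val}
    {φ : Constraint χ P} (h : ∀ x q, μ x = some q → ν x = some q)
    (hs : Constraint.sat μ f φ) : Constraint.sat ν f φ := by
  intro a ha
  have := hs a ha
  cases a with
  | strEq p c => exact this
  | cmp t₁ op t₂ =>
      obtain ⟨x, y, hx, hy, hxy⟩ := this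
      exact ⟨x, y, LinTerm.eval_mono f h t₁ x hx, LinTerm.eval_mono f h t₂ y hy, hxy⟩


/-- concatenation construction: gluing `Aut₁` (single initial state
`q₀₁`, final states without outgoing transitions) and `Aut₂` (single initial state
`q₀₂`) over the disjoint union of their state sets, redirecting into `q₀₂` every
`Δ₁`-transition targeting `F₁`: if `Aut₁` accepts a nonempty `p₁` with `μ₁`, `Aut₂`
accepts `p₂` with `μ₂`, and `μ₁, μ₂` are unifiable, then the glued automaton accepts
`p₁ ++ p₂` with `μ₁ ∪ μ₂`. -/
theorem concat_automaton_correct {L χ P Q₁ Q₂ : Type} [Fintype Q₁] [Fintype Q₂]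
    (A1 : PAutomaton L χ P Q₁) (A2 : PAutomaton L χ P Q₂)
    (q01 : Q₁) (q02 : Q₂)
    (h1 : A1.init = {q01}) (h2 : A2.init = {q02})
    (hnoOut : ∀ q ∈ A1.final, ∀ lab q', (q, lab, q') ∉ A1.delta)
    (A' : PAutomaton L χ P (Q₁ ⊕ Q₂))
    (hinit : A'.init = {Sum.inl q01})
    (hfinal : A'.final = Sum.inr '' A2.final)
    (hdelta : A'.delta =
      {tr | (∃ q lab q', (q, lab, q') ∈ A1.delta ∧ q' ∉ A1.final ∧
                tr = (Sum.inl q, lab, Sum.inl q'))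
          ∨ (∃ q lab q', (q, lab, q') ∈ A2.delta ∧
                tr = (Sum.inr q, lab, Sum.inr q'))
          ∨ (∃ q lab qf, (q, lab, qf) ∈ A1.delta ∧ qf ∈ A1.final ∧
                tr = (Sum.inl q, lab, Sum.inr q02))})
    (μ₁ μ₂ : Assignment χ) (p₁ p₂ : List (Element L P))
    (hp₁ : p₁ ≠ [])
    (hu : Unifiable μ₁ μ₂)
    (hacc1 : PAutomaton.Accepts A1 μ₁ p₁)
    (hacc2 : PAutomaton.Accepts A2 μ₂ p₂) :
    PAutomaton.Accepts A' (Assignment.union μ₁ μ₂) (p₁ ++ p₂) := by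
  
  classical
  obtain ⟨s0, hs0, hrun1⟩ := hacc1
  obtain ⟨t0, ht0, hrun2⟩ := hacc2
  rw [h1] at hs0; rw [h2] at ht0
  cases hs0; cases ht0
  set ν := Assignment.union μ₁ μ₂ with hν
  have hm1 : ∀ x q, μ₁ x = some q → ν x = some q := by
    intro x q hx; simp [hν, Assignment.union, hx, Option.orElse]
  have hm2 : ∀ x q, μ₂ x = some q → ν x = some q := by
    intro x q hx
    simp only [hν, Assignment.union]
    cases hx1 : μ₁ x with
    | none => simp [hx1, hx, Option.orElse]
    | some a => simp [hx1, Option.orElse, hu x a q hx1 hx]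
  -- run in A2 lifts
  have lift2 : ∀ (q : Q₂) (p : List (Element L P)),
      PAutomaton.AcceptsFrom A2 μ₂ q p →
      PAutomaton.AcceptsFrom A' ν (Sum.inr q) p := by
    intro q p hr
    induction hr with
    | nil q hq =>
        exact PAutomaton.AcceptsFrom.nil _ (by rw [hfinal]; exact ⟨q, hq, rfl⟩)
    | cons hd hc _ ih =>
        refine PAutomaton.AcceptsFrom.cons ?_ (Constraint.sat_mono hm2 hc) ih
        rw [hdelta]
        exact Or.inr (Or.inl ⟨_, _, _, hd, rfl⟩)
  have run2' : PAutomaton.AcceptsFrom A' ν (Sum.inr q02) p₂ := lift2 _ _ hrun2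
  -- run in A1 (nonempty) lifts with continuation
  have lift1 : ∀ (q : Q₁) (p : List (Element L P)),
      PAutomaton.AcceptsFrom A1 μ₁ q p → p ≠ [] →
      PAutomaton.AcceptsFrom A' ν (Sum.inl q) (p ++ p₂) := by
    intro q p hr
    induction hr with
    | nil q hq => intro h; exact absurd rfl h
    | @cons q q' l φ inv f rest hd hc hrest ih =>
        intro _
        have hsat := Constraint.sat_mono hm1 hc
        cases hrest with
        | nil _ hq' =>
            refine PAutomaton.AcceptsFrom.cons ?_ hsat run2'
            rw [hdelta]
            exact Or.inr (Or.inr ⟨q, _, q', hd, hq', rfl⟩)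
        | @cons _ q'' l2 φ2 inv2 f2 rest2 hd2 hc2 hrest2 =>
            have hq'nf : q' ∉ A1.final := fun hf => hnoOut q' hf _ _ hd2
            refine PAutomaton.AcceptsFrom.cons ?_ hsat (ih (by simp))
            rw [hdelta]
            exact Or.inl ⟨q, _, q', hd, hq'nf, rfl⟩
  exact ⟨Sum.inl q01, by rw [hinit]; rfl, lift1 q01 p₁ hrun1 hp₁⟩
end

section
/- (Kleene star construction.) Let Aut = (L, χ, Attr, Q, {q₀}, F, Δ) be a parametric automaton with a single initial state q₀ ∉ F such that no state of F has an outgoing transition in Δ. Let Aut' be the parametric automaton with state set Q ∖ F, single initial state q₀, final states {q₀}, and transitions Δ' = (Δ minus all transitions whose target lies in F) ∪ { q →(t, φ, inv) q₀ : q →(t, φ, inv) q_f ∈ Δ for some q_f ∈ F }. Then (i) Aut' accepts the empty sequence ε with the empty assignment, and (ii) for every n ≥ 1 and nonempty element sequences p₁, …, pₙ such that each pᵢ is accepted by Aut with assignment μᵢ and the assignments μ₁, …, μₙ are pairwise unifiable, Aut' accepts the concatenation p₁·p₂·⋯·pₙ with assignment μ₁ ∪ ⋯ ∪ μₙ. 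-/
section Aux

variable {L χ P Q : Type}

/-- `μ'` extends `μ`. -/
def AExt {χ : Type} (μ μ' : Assignment χ) : Prop :=
  ∀ x a, μ x = some a → μ' x = some a

lemma eval_ext {μ μ' : Assignment χ} (h : AExt μ μ') (f : P → Option Val) :
    ∀ (t : LinTerm χ P) (a : ℚ), LinTerm.eval μ f t = some a →
      LinTerm.eval μ' f t = some a := by
  intro t
  induction t with
  | const c => intro a ha; exact ha
  | param c x =>
      intro a ha
      simp only [LinTerm.eval, Option.map_eq_some_iff] at ha ⊢
      obtain ⟨q, hq, rfl⟩ := ha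
      exact ⟨q, h x q hq, rfl⟩
  | prop c p => intro a ha; exact ha
  | add t₁ t₂ ih₁ ih₂ =>
      intro a ha
      simp only [LinTerm.eval, Option.bind_eq_bind, Option.bind_eq_some_iff,
        Option.pure_def, Option.some_inj] at ha ⊢
      obtain ⟨x, hx, y, hy, rfl⟩ := ha
      exact ⟨x, ih₁ x hx, y, ih₂ y hy, rfl⟩

lemma sat_ext {μ μ' : Assignment χ} (h : AExt μ μ') {f : P → Option Val}
    {φ : Constraint χ P} (hs : Constraint.sat μ f φ) : Constraint.sat μ' f φ := by
  intro a ha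
  have := hs a ha
  cases a with
  | strEq p c => exact this
  | cmp t₁ op t₂ =>
      obtain ⟨x, y, hx, hy, hop⟩ := this
      exact ⟨x, y, eval_ext h f t₁ x hx, eval_ext h f t₂ y hy, hop⟩

lemma ext_union_left (μ₁ μ₂ : Assignment χ) : AExt μ₁ (Assignment.union μ₁ μ₂) := by
  intro x a ha
  simp [Assignment.union, ha]

lemma union_eq_some {μ₁ μ₂ : Assignment χ} {x : χ} {b : ℚ}
    (h : Assignment.union μ₁ μ₂ x = some b) :
    μ₁ x = some b ∨ (μ₁ x = none ∧ μ₂ x = some b) := by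
  unfold Assignment.union at h
  cases hx : μ₁ x with
  | none => simp [hx] at h; exact Or.inr ⟨rfl, h⟩
  | some c => simp [hx] at h; exact Or.inl (by rw [h])

lemma unif_fold {ν : Assignment χ} (μs : List (Assignment χ))
    (h : ∀ μ ∈ μs, Unifiable ν μ) :
    Unifiable ν (μs.foldr Assignment.union (Assignment.empty χ)) := by
  induction μs with
  | nil => intro x a b _ hb; simp [Assignment.empty] at hb
  | cons μ μs ih =>
      intro x a b ha hb
      rcases union_eq_some hb with hb' | ⟨_, hb'⟩
      · exact h μ (by simp) x a b ha hb'
      · exact ih (fun m hm => h m (by simp [hm])) x a b ha hb'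

lemma ext_fold {μ : Assignment χ} (μs : List (Assignment χ))
    (hmem : μ ∈ μs) (hpw : μs.Pairwise Unifiable) :
    AExt μ (μs.foldr Assignment.union (Assignment.empty χ)) := by
  induction μs with
  | nil => cases hmem
  | cons ν μs ih =>
      rw [List.pairwise_cons] at hpw
      rcases List.mem_cons.mp hmem with rfl | hmem
      · exact ext_union_left _ _
      · intro x a ha
        have hfold := ih hmem hpw.2 x a ha
        show (ν x).orElse (fun _ => List.foldr Assignment.union (Assignment.empty χ) μs x) = some a
        cases hx : ν x with
        | none => simpa [hx] using hfold
        | some c =>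
            have : c = a := unif_fold μs hpw.1 x c a hx hfold
            simp [hx, this]

end Aux

/-- Kleene star construction: from `Aut` with single initial state
`q₀ ∉ F` whose final states have no outgoing transitions, build `Aut'` on the state
set `Q ∖ F` (a subtype), with initial and final state `q₀`, keeping the transitions
not targeting `F` and redirecting those targeting `F` into `q₀`. Then (i) `Aut'`
accepts `ε` with the empty assignment, and (ii) any concatenation of `n ≥ 1`
nonempty sequences, each accepted by `Aut` with pairwise unifiable assignments, is
accepted by `Aut'` with the union of the assignments. -/
theorem star_automaton_correct {L χ P Q : Type} [Fintype Q]
    (A : PAutomaton L χ P Q) (q₀ : Q)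
    (hinit : A.init = {q₀}) (hq₀ : q₀ ∉ A.final)
    (hnoOut : ∀ q ∈ A.final, ∀ lab q', (q, lab, q') ∉ A.delta)
    (A' : PAutomaton L χ P (Subtype (fun q => q ∉ A.final)))
    (hinit' : A'.init = {⟨q₀, hq₀⟩})
    (hfinal' : A'.final = {⟨q₀, hq₀⟩})
    (hdelta' : A'.delta = setOf (fun tr =>
        (∃ (q q' : Subtype (fun q => q ∉ A.final)), ∃ lab,
            (q.1, lab, q'.1) ∈ A.delta ∧ tr = (q, lab, q'))
        ∨ (∃ (q : Subtype (fun q => q ∉ A.final)), ∃ lab qf,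
            qf ∈ A.final ∧ (q.1, lab, qf) ∈ A.delta ∧
            tr = (q, lab, ⟨q₀, hq₀⟩)))) :
    PAutomaton.Accepts A' (Assignment.empty χ) [] ∧
    ∀ ps : List (List (Element L P) × Assignment χ),
      ps ≠ [] →
      (∀ x ∈ ps, x.1 ≠ [] ∧ PAutomaton.Accepts A x.2 x.1) →
      (ps.map Prod.snd).Pairwise Unifiable →
      PAutomaton.Accepts A'
        ((ps.map Prod.snd).foldr Assignment.union (Assignment.empty χ))
        (ps.map Prod.fst).flatten := by
  constructor
  · exact ⟨⟨q₀, hq₀⟩, by rw [hinit']; rfl, .nil _ (by rw [hfinal']; rfl)⟩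
  · intro ps hne hall hpw
    set ν := (ps.map Prod.snd).foldr Assignment.union (Assignment.empty χ) with hν
    have loop : ∀ {μ : Assignment χ}, AExt μ ν → ∀ q p, A.AcceptsFrom μ q p → p ≠ [] →
        ∀ (hq : q ∉ A.final) rest, A'.AcceptsFrom ν ⟨q₀, hq₀⟩ rest →
          A'.AcceptsFrom ν ⟨q, hq⟩ (p ++ rest) := by
      intro μ hext q p hacc
      induction hacc with
      | nil q hqf => intro h; exact absurd rfl h
      | @cons q q' l φ inv f rest' hδ hsat hacc ih =>
        intro _ hq rest hrest'
        by_cases hq' : q' ∈ A.final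
        · have hr0 : rest' = [] := by
            cases hacc with
            | nil _ _ => rfl
            | cons hδ2 _ _ => exact absurd hδ2 (hnoOut q' hq' _ _)
          subst hr0
          refine PAutomaton.AcceptsFrom.cons (φ := φ) ?_ (sat_ext hext hsat) hrest'
          rw [hdelta']
          exact Or.inr ⟨⟨q, hq⟩, (l, φ, inv), q', hq', hδ, rfl⟩
        · have hne' : rest' ≠ [] := by
            intro h; subst h
            cases hacc with
            | nil _ hf => exact hq' hf
          refine PAutomaton.AcceptsFrom.cons (φ := φ) ?_ (sat_ext hext hsat)
            (ih hne' hq' rest hrest')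
          rw [hdelta']
          exact Or.inl ⟨⟨q, hq⟩, ⟨q', hq'⟩, (l, φ, inv), hδ, rfl⟩
    have flat : ∀ qs : List (List (Element L P)),
        (∀ p ∈ qs, p ≠ [] ∧ ∃ μ, AExt μ ν ∧ A.AcceptsFrom μ q₀ p) →
        A'.AcceptsFrom ν ⟨q₀, hq₀⟩ qs.flatten := by
      intro qs
      induction qs with
      | nil => intro _; exact .nil _ (by rw [hfinal']; rfl)
      | cons p qs ih =>
        intro h
        obtain ⟨hpne, μ, hext, hacc⟩ := h p (by simp)
        simpa using loop hext q₀ p hacc hpne hq₀ _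
          (ih (fun p hp => h p (by simp [hp])))
    refine ⟨⟨q₀, hq₀⟩, by rw [hinit']; rfl, flat _ ?_⟩
    intro p hp
    obtain ⟨x, hx, rfl⟩ := List.mem_map.mp hp
    obtain ⟨hne1, hacc⟩ := hall x hx
    obtain ⟨q, hqinit, hacc⟩ := hacc
    rw [hinit] at hqinit
    cases hqinit
    exact ⟨hne1, x.2, ext_fold _ (List.mem_map_of_mem (f := Prod.snd) hx) hpw, hacc⟩
end

section
/- (Correctness of the strict-inequality and equality rewriting rules.) Let X be a type, let I, J, K be finite index types, and let aᵢ, bᵢ : X → ℚ for i : I, cⱼ, dⱼ : X → ℚ for j : J, and eₖ, gₖ : X → ℚ for k : K. Then for every x : X, the following are equivalent: (1) (∀ i, aᵢ x < bᵢ x) and (∀ j, cⱼ x > dⱼ x) and (∀ k, eₖ x = gₖ x); (2) there exists ε : ℚ with ε > 0 such that (∀ i, aᵢ x + ε ≤ bᵢ x) and (∀ j, cⱼ x − ε ≥ dⱼ x) and (∀ k, eₖ x ≤ gₖ x and eₖ x ≥ gₖ x). -/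
/-- correctness of the strict-inequality and equality rewriting rules:
for finitely many constraints, the conjunction of the strict inequalities
`aᵢ x < bᵢ x`, `cⱼ x > dⱼ x` and the equalities `eₖ x = gₖ x` holds iff there is a
single rational `ε > 0` with `aᵢ x + ε ≤ bᵢ x`, `cⱼ x − ε ≥ dⱼ x`, and
`eₖ x ≤ gₖ x ∧ eₖ x ≥ gₖ x`. -/
theorem rewriting_rules_correct {X I J K : Type} [Fintype I] [Fintype J] [Fintype K]
    (a b : I → X → ℚ) (c d : J → X → ℚ) (e g : K → X → ℚ) (x : X) :
    ((∀ i, a i x < b i x) ∧ (∀ j, c j x > d j x) ∧ (∀ k, e k x = g k x)) ↔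
    (∃ ε : ℚ, ε > 0 ∧ (∀ i, a i x + ε ≤ b i x) ∧ (∀ j, c j x - ε ≥ d j x) ∧
      (∀ k, e k x ≤ g k x ∧ e k x ≥ g k x)) := by
  constructor
  · rintro ⟨ha, hc, he⟩
    set S : Finset ℚ :=
      (Finset.univ.image fun i => b i x - a i x) ∪
      (Finset.univ.image fun j => c j x - d j x) ∪ {1} with hS
    have hne : S.Nonempty := ⟨1, by simp [hS]⟩
    refine ⟨S.min' hne, ?_, ?_, ?_, ?_⟩
    · have := S.min'_mem hne
      simp only [hS, Finset.mem_union, Finset.mem_image, Finset.mem_singleton,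
        Finset.mem_univ, true_and] at this
      rcases this with (⟨i, hi⟩ | ⟨j, hj⟩) | h1
      · rw [← hi]; linarith [ha i]
      · rw [← hj]; linarith [hc j]
      · rw [h1]; norm_num
    · intro i
      have : S.min' hne ≤ b i x - a i x :=
        Finset.min'_le _ _ (by simp [hS])
      linarith
    · intro j
      have : S.min' hne ≤ c j x - d j x :=
        Finset.min'_le _ _ (by simp [hS])
      linarith
    · intro k; exact ⟨le_of_eq (he k), ge_of_eq (he k)⟩
  · rintro ⟨ε, hε, ha, hc, he⟩
    exact ⟨fun i => by linarith [ha i], fun j => by linarith [hc j],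
      fun k => le_antisymm (he k).1 (he k).2⟩
end
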